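/- Let d ≥ 1, let Σ be a positive definite d×d real matrix, let θ₀ ∈ ℝ^d and σ ≥ 0. Define R_L(θ,ε) := ‖θ−θ₀‖²_Σ + σ² + ε²‖θ‖₂² + 2ε√(2/π)·‖θ‖₂·√(‖θ−θ₀‖²_Σ + σ²). Then there exists a constant c > 0 (depending only on θ₀, Σ, σ) such that for every ε ≥ c, the point θ = 0 is a global minimizer of R_L(·,ε): R_L(0,ε) ≤ R_L(θ,ε) for all θ ∈ ℝ^d. -/

import Mathlib

open MeasureTheory ProbabilityTheory Real Filter Matrix
open scoped RealInnerProductSpace BigOperators NNReal ENNReal Topology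

noncomputable section

/-- The Σ-quadratic form `aᵀ Σ a`. -/
def quadForm {d : ℕ} (S : Matrix (Fin d) (Fin d) ℝ) (a : EuclideanSpace ℝ (Fin d)) : ℝ :=
  ∑ i, ∑ j, a i * S i j * a j

variable {d : ℕ} (S : Matrix (Fin d) (Fin d) ℝ)

lemma quadForm_nonneg (hS : S.PosDef) (a : EuclideanSpace ℝ (Fin d)) :
    0 ≤ quadForm S a := by
  have h := hS.posSemidef.dotProduct_mulVec_nonneg (fun j => a j)
  simp only [star_trivial, dotProduct, Matrix.mulVec] at h
  calc (0:ℝ) ≤ ∑ i, a i * (S i ⬝ᵥ fun j => a j) := h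
    _ = quadForm S a := by
        simp only [quadForm, dotProduct, Finset.mul_sum]
        exact Finset.sum_congr rfl fun i _ => Finset.sum_congr rfl fun j _ => by ring

def Bf {d : ℕ} (S : Matrix (Fin d) (Fin d) ℝ) (a b : EuclideanSpace ℝ (Fin d)) : ℝ :=
  ∑ i, ∑ j, a i * S i j * b j

lemma quad_expand (a b : EuclideanSpace ℝ (Fin d)) (t : ℝ) :
    quadForm S (a + t • b) =
      quadForm S a + (Bf S a b + Bf S b a) * t + quadForm S b * (t * t) := by
  simp only [quadForm, Bf, Finset.sum_mul, add_mul, ← Finset.sum_add_distrib]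
  refine Finset.sum_congr rfl fun i _ => Finset.sum_congr rfl fun j _ => ?_
  have h1 : (a + t • b) i = a i + t * b i := rfl
  have h2 : (a + t • b) j = a j + t * b j := rfl
  rw [h1, h2]; ring

lemma sqrt_quad_triangle (hS : S.PosDef) (a b : EuclideanSpace ℝ (Fin d)) :
    Real.sqrt (quadForm S (a + b)) ≤
      Real.sqrt (quadForm S a) + Real.sqrt (quadForm S b) := by
  set C := Bf S a b + Bf S b a with hC
  have hd : discrim (quadForm S b) C (quadForm S a) ≤ 0 := by
    apply discrim_le_zero
    intro x
    rw [hC]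
    have := quadForm_nonneg S hS (a + x • b)
    rw [quad_expand] at this
    linarith
  rw [discrim] at hd
  have hQa := quadForm_nonneg S hS a
  have hQb := quadForm_nonneg S hS b
  have hCle : C ≤ 2 * (Real.sqrt (quadForm S a) * Real.sqrt (quadForm S b)) := by
    have h1 : C ≤ |C| := le_abs_self C
    have h2 : |C| = Real.sqrt (C^2) := (Real.sqrt_sq_eq_abs C).symm
    have h3 : Real.sqrt (C^2) ≤ Real.sqrt (4 * (quadForm S a * quadForm S b)) := by
      apply Real.sqrt_le_sqrt; nlinarith
    have h4 : Real.sqrt (4 * (quadForm S a * quadForm S b)) =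
        2 * (Real.sqrt (quadForm S a) * Real.sqrt (quadForm S b)) := by
      rw [show (4:ℝ) * (quadForm S a * quadForm S b) = 2^2 * (quadForm S a * quadForm S b) by ring,
        Real.sqrt_mul (by positivity), Real.sqrt_sq (by norm_num), Real.sqrt_mul hQa]
    linarith [h2 ▸ h1, h4 ▸ h3]
  have hexp : quadForm S (a + b) = quadForm S a + C + quadForm S b := by
    have := quad_expand S a b 1
    simp only [one_smul, mul_one] at this
    linarith [this]
  have : quadForm S (a + b) ≤
      (Real.sqrt (quadForm S a) + Real.sqrt (quadForm S b))^2 := by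
    have ea : Real.sqrt (quadForm S a) ^ 2 = quadForm S a := Real.sq_sqrt hQa
    have eb : Real.sqrt (quadForm S b) ^ 2 = quadForm S b := Real.sq_sqrt hQb
    nlinarith
  calc Real.sqrt (quadForm S (a + b)) ≤
      Real.sqrt ((Real.sqrt (quadForm S a) + Real.sqrt (quadForm S b))^2) :=
        Real.sqrt_le_sqrt this
    _ = _ := Real.sqrt_sq (by positivity)

lemma quad_le (θ : EuclideanSpace ℝ (Fin d)) :
    quadForm S θ ≤ (∑ i, ∑ j, |S i j|) * ‖θ‖^2 := by
  have habs : ∀ i, |θ i| ≤ ‖θ‖ := fun i => by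
    have := EuclideanSpace.norm_eq θ
    have h1 : ‖θ i‖^2 ≤ ∑ j, ‖θ j‖^2 :=
      Finset.single_le_sum (f := fun j => ‖θ j‖^2) (fun j _ => by positivity) (Finset.mem_univ i)
    have : |θ i| = Real.sqrt (‖θ i‖^2) := by
      rw [Real.sqrt_sq_eq_abs]; simp
    rw [this, EuclideanSpace.norm_eq]
    exact Real.sqrt_le_sqrt h1
  rw [Finset.sum_mul]
  apply Finset.sum_le_sum; intro i _
  rw [Finset.sum_mul]
  apply Finset.sum_le_sum; intro j _
  calc θ i * S i j * θ j ≤ |θ i * S i j * θ j| := le_abs_self _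
    _ = |S i j| * (|θ i| * |θ j|) := by rw [abs_mul, abs_mul]; ring
    _ ≤ |S i j| * (‖θ‖ * ‖θ‖) := by
        apply mul_le_mul_of_nonneg_left _ (abs_nonneg _)
        exact mul_le_mul (habs i) (habs j) (abs_nonneg _) (norm_nonneg _)
    _ = |S i j| * ‖θ‖^2 := by ring

lemma quadForm_neg (a : EuclideanSpace ℝ (Fin d)) : quadForm S (-a) = quadForm S a := by
  simp only [quadForm]
  refine Finset.sum_congr rfl fun i _ => Finset.sum_congr rfl fun j _ => ?_
  have h1 : (-a) i = -(a i) := rfl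
  have h2 : (-a) j = -(a j) := rfl
  rw [h1, h2]; ring

/-- The population adversarial risk of the linear model `f_θ(x) = θᵀx` under squared loss
and `L2` attacks of strength `ε`, for `x ~ N(0,Σ)` and `y = θ₀ᵀx + w`, `w ~ N(0,σ²)`:
`R_L(θ,ε) = ‖θ−θ₀‖²_Σ + σ² + ε²‖θ‖₂² + 2ε√(2/π)‖θ‖₂√(‖θ−θ₀‖²_Σ + σ²)`. -/
def RL {d : ℕ} (S : Matrix (Fin d) (Fin d) ℝ) (θ0 : EuclideanSpace ℝ (Fin d))
    (σ ε : ℝ) (θ : EuclideanSpace ℝ (Fin d)) : ℝ :=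
  quadForm S (θ - θ0) + σ ^ 2 + ε ^ 2 * ‖θ‖ ^ 2 +
    2 * ε * Real.sqrt (2 / Real.pi) * ‖θ‖ * Real.sqrt (quadForm S (θ - θ0) + σ ^ 2)

set_option maxHeartbeats 1000000 in
/-- There is a constant `c > 0` (depending only on `θ₀, Σ, σ`) such that for
every attack strength `ε ≥ c`, the point `θ = 0` is a global minimizer of `R_L(·,ε)`. -/
theorem adversarial_risk_zero_is_minimizer_for_large_eps
    {d : ℕ} (hd : 1 ≤ d) (S : Matrix (Fin d) (Fin d) ℝ) (hS : S.PosDef)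
    (θ0 : EuclideanSpace ℝ (Fin d)) (σ : ℝ) (hσ : 0 ≤ σ) :
    ∃ c : ℝ, 0 < c ∧ ∀ ε : ℝ, c ≤ ε → ∀ θ : EuclideanSpace ℝ (Fin d),
      RL S θ0 σ ε 0 ≤ RL S θ0 σ ε θ := by
  obtain ⟨M, hMdef⟩ : ∃ M : ℝ, M = 1 + ∑ i, ∑ j, |S i j| := ⟨_, rfl⟩
  have hM1 : (1:ℝ) ≤ M := by
    have : (0:ℝ) ≤ ∑ i, ∑ j, |S i j| := by positivity
    rw [hMdef]; linarith
  have hM0 : (0:ℝ) < M := by linarith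
  have hpi : (0:ℝ) < Real.pi := Real.pi_pos
  refine ⟨Real.sqrt (M * (Real.pi / 2)), by positivity, fun ε hε θ => ?_⟩
  have hc0 : (0:ℝ) ≤ Real.sqrt (M * (Real.pi / 2)) := Real.sqrt_nonneg _
  have hε0 : 0 ≤ ε := le_trans hc0 hε
  set t : ℝ := ‖θ‖ with ht
  have ht0 : 0 ≤ t := norm_nonneg θ
  set Q1 : ℝ := quadForm S (θ - θ0) with hQ1def
  have hQ1 : 0 ≤ Q1 := quadForm_nonneg S hS _
  have hQθ : 0 ≤ quadForm S θ := quadForm_nonneg S hS θ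
  -- bound on quadForm S θ
  have hquadle : quadForm S θ ≤ M * t ^ 2 := by
    have := quad_le S θ
    nlinarith [sq_nonneg t]
  have hsqQθ : Real.sqrt (quadForm S θ) ≤ Real.sqrt M * t := by
    calc Real.sqrt (quadForm S θ) ≤ Real.sqrt (M * t ^ 2) := Real.sqrt_le_sqrt hquadle
      _ = Real.sqrt M * t := by
          rw [Real.sqrt_mul hM0.le, Real.sqrt_sq ht0]
  -- triangle inequality
  have hdecomp : (0 : EuclideanSpace ℝ (Fin d)) - θ0 = (θ - θ0) + (-θ) := by abel
  have htri : Real.sqrt (quadForm S (0 - θ0)) ≤ Real.sqrt Q1 + Real.sqrt M * t := by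
    calc Real.sqrt (quadForm S (0 - θ0))
        = Real.sqrt (quadForm S ((θ - θ0) + (-θ))) := by rw [hdecomp]
      _ ≤ Real.sqrt (quadForm S (θ - θ0)) + Real.sqrt (quadForm S (-θ)) :=
          sqrt_quad_triangle S hS _ _
      _ = Real.sqrt Q1 + Real.sqrt (quadForm S θ) := by rw [quadForm_neg]
      _ ≤ Real.sqrt Q1 + Real.sqrt M * t := by linarith
  have hQ0 : quadForm S (0 - θ0) ≤ (Real.sqrt Q1 + Real.sqrt M * t) ^ 2 := by
    have h0 : 0 ≤ quadForm S (0 - θ0) := quadForm_nonneg S hS _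
    have := Real.sqrt_le_sqrt (le_refl (quadForm S (0 - θ0)))
    nlinarith [Real.sq_sqrt h0, Real.sqrt_nonneg (quadForm S (0 - θ0)), htri,
      Real.sqrt_nonneg Q1, Real.sqrt_nonneg M]
  -- ε conditions
  have hε2 : M ≤ ε ^ 2 := by
    have h1 : M * (Real.pi / 2) ≤ ε ^ 2 := by
      have := Real.sq_sqrt (show (0:ℝ) ≤ M * (Real.pi / 2) by positivity)
      nlinarith
    nlinarith [Real.pi_gt_three]
  have hεs : Real.sqrt M ≤ ε * Real.sqrt (2 / Real.pi) := by
    have key : Real.sqrt (M * (Real.pi / 2)) * Real.sqrt (2 / Real.pi) = Real.sqrt M := by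
      rw [← Real.sqrt_mul (by positivity)]
      congr 1
      field_simp
    calc Real.sqrt M = Real.sqrt (M * (Real.pi / 2)) * Real.sqrt (2 / Real.pi) := key.symm
      _ ≤ ε * Real.sqrt (2 / Real.pi) :=
          mul_le_mul_of_nonneg_right hε (Real.sqrt_nonneg _)
  have hsQ1 : Real.sqrt Q1 ≤ Real.sqrt (Q1 + σ ^ 2) := by
    apply Real.sqrt_le_sqrt; nlinarith [sq_nonneg σ]
  -- assemble
  simp only [RL, norm_zero, ← hQ1def, ← ht]
  have hsq : Real.sqrt Q1 ^ 2 = Q1 := Real.sq_sqrt hQ1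
  have hMs : Real.sqrt M ^ 2 = M := Real.sq_sqrt hM0.le
  have hcross : 2 * (Real.sqrt M) * t * Real.sqrt Q1 ≤
      2 * ε * Real.sqrt (2 / Real.pi) * t * Real.sqrt (Q1 + σ ^ 2) := by
    have h1 : Real.sqrt M * Real.sqrt Q1 ≤
        (ε * Real.sqrt (2 / Real.pi)) * Real.sqrt (Q1 + σ ^ 2) :=
      mul_le_mul hεs hsQ1 (Real.sqrt_nonneg _) (by positivity)
    nlinarith [mul_le_mul_of_nonneg_right h1 ht0]
  have hMt : M * t ^ 2 ≤ ε ^ 2 * t ^ 2 :=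
    mul_le_mul_of_nonneg_right hε2 (by positivity)
  nlinarith [hQ0, hsq, hMs, Real.sqrt_nonneg Q1, Real.sqrt_nonneg M,
    Real.sqrt_nonneg (Q1 + σ ^ 2), Real.sqrt_nonneg (2 / Real.pi)]


end
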